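/- Let φ ∈ ℝ and let f : (0,∞) → ℝ be differentiable. Then the divergence of F_{φ,f} vanishes identically on ℝ²∖{0} if and only if either cos φ = 0 (i.e. φ ∈ {π/2, 3π/2} modulo 2π) or there exists a constant K ∈ ℝ such that f(x) = K x^{−2} for all x > 0. -/

import Mathlib

open Filter Set

noncomputable section

abbrev V2 : Type := EuclideanSpace ℝ (Fin 2)

/-- Rotation of `ℝ²` by angle `φ`. -/
def Rot (φ : ℝ) (q : V2) : V2 :=
  !₂[Real.cos φ * q 0 - Real.sin φ * q 1, Real.sin φ * q 0 + Real.cos φ * q 1]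

/-- The kernel `F_{φ,f}(q) = f(‖q‖) R_φ q`. -/
def Fpf (φ : ℝ) (f : ℝ → ℝ) (q : V2) : V2 := f ‖q‖ • Rot φ q

/-- The partial derivative `∂ⱼ Fₖ (q)`. -/
def pderiv2 (F : V2 → V2) (j k : Fin 2) (q : V2) : ℝ :=
  fderiv ℝ F q (EuclideanSpace.single j 1) k

/-- The divergence `∇·F = ∂₁F₁ + ∂₂F₂`. -/
def divF (F : V2 → V2) (q : V2) : ℝ := pderiv2 F 0 0 q + pderiv2 F 1 1 q

/-- The scalar curl `∇^⊥·F = ∂₁F₂ − ∂₂F₁`. -/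
def curlF (F : V2 → V2) (q : V2) : ℝ := pderiv2 F 0 1 q - pderiv2 F 1 0 q

end

noncomputable section AuxRot

/-- `Rot φ` as a continuous linear map. -/
def RotL (φ : ℝ) : V2 →L[ℝ] V2 :=
  (EuclideanSpace.equiv (Fin 2) ℝ).symm.toContinuousLinearMap.comp
    (ContinuousLinearMap.pi
      ![Real.cos φ • EuclideanSpace.proj (0:Fin 2) - Real.sin φ • EuclideanSpace.proj (1:Fin 2),
        Real.sin φ • EuclideanSpace.proj (0:Fin 2) + Real.cos φ • EuclideanSpace.proj (1:Fin 2)])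

lemma RotL_apply (φ : ℝ) (q : V2) : RotL φ q = Rot φ q := by
  ext k
  fin_cases k <;> simp [RotL, Rot, EuclideanSpace.equiv, sub_eq_add_neg]

lemma hasFDerivAt_norm' (q : V2) (hq : q ≠ 0) :
    HasFDerivAt (fun p : V2 => ‖p‖) (‖q‖⁻¹ • innerSL ℝ q) q := by
  have h1 : HasFDerivAt (fun p : V2 => ‖p‖ ^ 2) (2 • (innerSL ℝ q)) q :=
    (hasStrictFDerivAt_norm_sq q).hasFDerivAt
  have hpos : 0 < ‖q‖ := norm_pos_iff.mpr hq
  have hne : ‖q‖ ^ 2 ≠ 0 := by positivity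
  have h2 := h1.sqrt hne
  have hs : Real.sqrt (‖q‖ ^ 2) = ‖q‖ := Real.sqrt_sq (norm_nonneg q)
  have hfun : (fun p : V2 => Real.sqrt (‖p‖ ^ 2)) = fun p : V2 => ‖p‖ := by
    funext p; exact Real.sqrt_sq (norm_nonneg p)
  rw [hfun] at h2
  refine h2.congr_fderiv ?_
  rw [hs]
  ext v
  simp [smul_smul]
  have : ‖q‖ ≠ 0 := norm_ne_zero_iff.mpr hq
  field_simp

lemma key_hasFDerivAt (φ : ℝ) (f : ℝ → ℝ) (q : V2) (hq : q ≠ 0)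
    (hf : DifferentiableAt ℝ f ‖q‖) :
    HasFDerivAt (Fpf φ f)
      ((f ‖q‖) • (RotL φ) +
        ((deriv f ‖q‖) • (‖q‖⁻¹ • innerSL ℝ q)).smulRight (RotL φ q)) q := by
  have hn := hasFDerivAt_norm' q hq
  have hg : HasFDerivAt (fun p : V2 => f ‖p‖)
      ((deriv f ‖q‖) • (‖q‖⁻¹ • innerSL ℝ q)) q :=
    (hf.hasDerivAt).comp_hasFDerivAt q hn
  have hR : HasFDerivAt (fun p : V2 => RotL φ p) (RotL φ) q := (RotL φ).hasFDerivAt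
  have h := hg.smul hR
  have : (fun p : V2 => f ‖p‖ • RotL φ p) = Fpf φ f := by
    funext p; rw [Fpf, RotL_apply]
  rw [← this]
  exact h

lemma key_div (φ : ℝ) (f : ℝ → ℝ) (q : V2) (hq : q ≠ 0)
    (hf : DifferentiableAt ℝ f ‖q‖) :
    divF (Fpf φ f) q
      = Real.cos φ * (2 * f ‖q‖ + ‖q‖ * deriv f ‖q‖) := by
  have h := key_hasFDerivAt φ f q hq hf
  have hpos : 0 < ‖q‖ := norm_pos_iff.mpr hq
  have hfd := h.fderiv
  rw [divF, pderiv2, pderiv2, hfd]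
  have hq2 : (q 0) ^ 2 + (q 1) ^ 2 = ‖q‖ ^ 2 := by
    have := real_inner_self_eq_norm_sq q
    rw [PiLp.inner_apply] at this
    simp [Fin.sum_univ_two] at this
    rw [← this]
  simp [ContinuousLinearMap.smul_apply, ContinuousLinearMap.smulRight_apply,
    EuclideanSpace.inner_single_right, RotL_apply, Rot,
    EuclideanSpace.single_apply]
  have hne : ‖q‖ ≠ 0 := ne_of_gt hpos
  field_simp
  linear_combination (deriv f ‖q‖ * Real.cos φ) * hq2

lemma deriv_inv_sq (f : ℝ → ℝ) (K : ℝ) (r : ℝ) (hr : 0 < r)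
    (hK : ∀ x : ℝ, 0 < x → f x = K / x ^ 2) :
    deriv f r = -2 * K / r ^ 3 := by
  have hev : f =ᶠ[nhds r] fun x => K / x ^ 2 := by
    filter_upwards [Ioi_mem_nhds hr] with x hx using hK x hx
  rw [hev.deriv_eq]
  have h1 : HasDerivAt (fun x : ℝ => x ^ 2) (2 * r) r := by
    simpa using hasDerivAt_pow 2 r
  have h2 := (h1.inv (by positivity)).const_mul K
  have h3 : (fun x : ℝ => K * (x ^ 2)⁻¹) = fun x => K / x ^ 2 := by
    funext x; rw [div_eq_mul_inv]
  simp only [Pi.inv_apply] at h2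
  rw [h3] at h2
  rw [h2.deriv]
  field_simp

lemma ode_solution (f : ℝ → ℝ) (hf : ∀ x : ℝ, 0 < x → DifferentiableAt ℝ f x)
    (hd : ∀ x : ℝ, 0 < x → 2 * f x + x * deriv f x = 0) :
    ∀ x : ℝ, 0 < x → f x = f 1 / x ^ 2 := by
  set g : ℝ → ℝ := fun x => x ^ 2 * f x with hg
  have hgd : ∀ x : ℝ, 0 < x → HasDerivAt g 0 x := by
    intro x hx
    have h1 : HasDerivAt (fun y : ℝ => y ^ 2) (2 * x) x := by simpa using hasDerivAt_pow 2 x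
    have h2 := h1.mul (hf x hx).hasDerivAt
    have : 2 * x * f x + x ^ 2 * deriv f x = 0 := by
      have := hd x hx; nlinarith
    rwa [this] at h2
  have hgc : ∀ x : ℝ, 0 < x → g x = g 1 := by
    intro x hx
    rcases le_total x 1 with hle | hle
    · have := constant_of_has_deriv_right_zero (f := g) (a := x) (b := 1)
        (fun y hy => ((hgd y (lt_of_lt_of_le hx hy.1)).differentiableAt.continuousAt).continuousWithinAt)
        (fun y hy => ((hgd y (lt_of_lt_of_le hx hy.1)).hasDerivWithinAt))
      exact (this 1 ⟨hle, le_refl 1⟩).symm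
    · have := constant_of_has_deriv_right_zero (f := g) (a := 1) (b := x)
        (fun y hy => ((hgd y (lt_of_lt_of_le one_pos hy.1)).differentiableAt.continuousAt).continuousWithinAt)
        (fun y hy => ((hgd y (lt_of_lt_of_le one_pos hy.1)).hasDerivWithinAt))
      exact this x ⟨hle, le_refl x⟩
  intro x hx
  have := hgc x hx
  have h1 : g 1 = f 1 := by simp [hg]
  rw [h1] at this
  simp only [hg] at this
  field_simp [hg] at this ⊢
  linarith [this]

end AuxRot


/-- The divergence of `F_{φ,f}` vanishes identically on `ℝ² ∖ {0}`
iff `cos φ = 0` or `f(x) = K x⁻²` for some constant `K`. -/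
theorem divergence_free_iff_Fpf (φ : ℝ) (f : ℝ → ℝ)
    (hf : ∀ x : ℝ, 0 < x → DifferentiableAt ℝ f x) :
    (∀ q : V2, q ≠ 0 → divF (Fpf φ f) q = 0) ↔
      (Real.cos φ = 0 ∨ ∃ K : ℝ, ∀ x : ℝ, 0 < x → f x = K / x ^ 2) := by
  constructor
  · intro H
    by_cases hc : Real.cos φ = 0
    · exact Or.inl hc
    · right
      refine ⟨f 1, ode_solution f hf ?_⟩
      intro x hx
      set q : V2 := EuclideanSpace.single 0 x with hqdef
      have hnq : ‖q‖ = x := by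
        rw [hqdef, EuclideanSpace.norm_single]
        exact abs_of_pos hx
      have hq : q ≠ 0 := by
        intro h0
        rw [h0, norm_zero] at hnq
        exact absurd hnq.symm (ne_of_gt hx)
      have := H q hq
      rw [key_div φ f q hq (by rw [hnq]; exact hf x hx), hnq] at this
      rcases mul_eq_zero.mp this with h | h
      · exact absurd h hc
      · exact h
  · rintro (hc | ⟨K, hK⟩) <;> intro q hq
    · have hpos : 0 < ‖q‖ := norm_pos_iff.mpr hq
      rw [key_div φ f q hq (hf _ hpos), hc, zero_mul]
    · have hpos : 0 < ‖q‖ := norm_pos_iff.mpr hq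
      rw [key_div φ f q hq (hf _ hpos), deriv_inv_sq f K _ hpos hK, hK _ hpos]
      have hne : ‖q‖ ≠ 0 := ne_of_gt hpos
      field_simp
      ring
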